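/- For every integer n ≥ 1 and real r ≥ 1, ((n+1)^r + n^r)/((n+1)^{r+1} − n^{r+1}) ≥ ((n+2)^r + (n+1)^r)/((n+2)^{r+1} − (n+1)^{r+1}). -/

import Mathlib

open Real Set

private lemma mono_aux {f f' : ℝ → ℝ}
    (hf : ∀ t ∈ Set.Ici (1:ℝ), HasDerivAt f (f' t) t)
    (hf' : ∀ t ∈ Set.Ioi (1:ℝ), 0 ≤ f' t) :
    MonotoneOn f (Set.Ici (1:ℝ)) := by
  apply monotoneOn_of_hasDerivWithinAt_nonneg (convex_Ici 1)
    (fun t ht => (hf t ht).continuousAt.continuousWithinAt)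
  · intro t ht
    rw [interior_Ici] at ht
    exact (hf t (Set.mem_Ici.mpr (le_of_lt ht))).hasDerivWithinAt
  · intro t ht
    rw [interior_Ici] at ht
    exact hf' t ht

private lemma h_nonneg {r : ℝ} (hr : 1 ≤ r) {t : ℝ} (ht : 1 ≤ t) :
    0 ≤ 2 * t ^ (r + 1) - (r + 1) * t ^ (2:ℝ) + (r - 1) := by
  have key : MonotoneOn (fun t : ℝ => 2 * t ^ (r + 1) - (r + 1) * t ^ (2:ℝ) + (r - 1))
      (Set.Ici (1:ℝ)) := by
    apply mono_aux (f' := fun t => 2 * ((r + 1) * t ^ r) - (r + 1) * (2 * t ^ ((2:ℝ) - 1)))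
    · intro t ht
      have h1 : HasDerivAt (fun t : ℝ => t ^ (r + 1)) ((r + 1) * t ^ r) t := by
        have := Real.hasDerivAt_rpow_const (x := t) (p := r + 1) (Or.inr (by linarith))
        simpa using this
      have h2 : HasDerivAt (fun t : ℝ => t ^ (2:ℝ)) (2 * t ^ ((2:ℝ) - 1)) t :=
        Real.hasDerivAt_rpow_const (x := t) (p := (2:ℝ)) (Or.inr (by norm_num))
      simpa using ((h1.const_mul 2).sub (h2.const_mul (r + 1))).add_const (r - 1)
    · intro t ht
      have ht1 : (1:ℝ) ≤ t := le_of_lt ht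
      have h3 : t ^ (1:ℝ) ≤ t ^ r := Real.rpow_le_rpow_of_exponent_le ht1 hr
      have e : t ^ ((2:ℝ) - 1) = t := by norm_num
      rw [e]
      rw [Real.rpow_one] at h3
      nlinarith [mul_nonneg (by linarith : (0:ℝ) ≤ r + 1) (sub_nonneg.mpr h3)]
  have := key (mem_Ici.mpr le_rfl) (mem_Ici.mpr ht) ht
  simp only [Real.one_rpow] at this
  linarith

private lemma g_nonneg {r : ℝ} (hr : 1 ≤ r) {t : ℝ} (ht : 1 ≤ t) :
    r * t ^ (r + 1) - r * t ^ (r - 1) ≤ t ^ (2 * r) - 1 := by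
  have key : MonotoneOn (fun t : ℝ => t ^ (2 * r) - 1 - r * t ^ (r + 1) + r * t ^ (r - 1))
      (Set.Ici (1:ℝ)) := by
    apply mono_aux (f' := fun t =>
      2 * r * t ^ (2 * r - 1) - r * ((r + 1) * t ^ r) + r * ((r - 1) * t ^ (r - 1 - 1)))
    · intro t ht
      have ht0 : t ≠ 0 := by intro h; rw [h] at ht; norm_num at ht
      have h1 : HasDerivAt (fun t : ℝ => t ^ (2 * r)) (2 * r * t ^ (2 * r - 1)) t :=
        Real.hasDerivAt_rpow_const (Or.inl ht0)
      have h2 : HasDerivAt (fun t : ℝ => t ^ (r + 1)) ((r + 1) * t ^ (r + 1 - 1)) t :=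
        Real.hasDerivAt_rpow_const (Or.inl ht0)
      have h3 : HasDerivAt (fun t : ℝ => t ^ (r - 1)) ((r - 1) * t ^ (r - 1 - 1)) t :=
        Real.hasDerivAt_rpow_const (Or.inl ht0)
      have e : r + 1 - 1 = r := by ring
      rw [e] at h2
      exact (((h1.sub_const 1).sub (h2.const_mul r)).add (h3.const_mul r))
    · intro t ht
      have ht1 : (1:ℝ) ≤ t := le_of_lt ht
      have ht0 : (0:ℝ) < t := by linarith
      have hr2 : (0:ℝ) < t ^ (r - 2) := Real.rpow_pos_of_pos ht0 _
      have hh := h_nonneg hr ht1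
      have e1 : t ^ (2 * r - 1) = t ^ (r - 2) * t ^ (r + 1) := by
        rw [← Real.rpow_add ht0]; congr 1; ring
      have e2 : t ^ r = t ^ (r - 2) * t ^ (2:ℝ) := by
        rw [← Real.rpow_add ht0]; congr 1; ring
      have e3 : t ^ (r - 1 - 1) = t ^ (r - 2) := by congr 1; ring
      rw [e1, e2, e3]
      nlinarith [mul_nonneg (mul_nonneg (by linarith : (0:ℝ) ≤ r) hr2.le) hh]
  have := key (mem_Ici.mpr le_rfl) (mem_Ici.mpr ht) ht
  simp only [Real.one_rpow] at this
  linarith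

private lemma phi_mono {r : ℝ} (hr : 1 ≤ r) :
    MonotoneOn (fun x : ℝ => ((x + 1) ^ (r + 1) - x ^ (r + 1)) / ((x + 1) ^ r + x ^ r))
      (Set.Ici (1:ℝ)) := by
  apply mono_aux (f' := fun x =>
    (((r + 1) * (x + 1) ^ r - (r + 1) * x ^ r) * ((x + 1) ^ r + x ^ r) -
      ((x + 1) ^ (r + 1) - x ^ (r + 1)) * (r * (x + 1) ^ (r - 1) + r * x ^ (r - 1))) /
      ((x + 1) ^ r + x ^ r) ^ 2)
  · intro x hx
    have hv : (0:ℝ) < x := lt_of_lt_of_le one_pos hx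
    have hu : (0:ℝ) < x + 1 := by linarith
    have hb : HasDerivAt (fun y : ℝ => y + 1) 1 x := by
      simpa using (hasDerivAt_id x).add_const 1
    have du1 : HasDerivAt (fun y : ℝ => (y + 1) ^ (r + 1)) ((r + 1) * (x + 1) ^ r) x := by
      have := (Real.hasDerivAt_rpow_const (x := x + 1) (p := r + 1) (Or.inl hu.ne')).comp x hb
      simpa [Function.comp_def, add_sub_cancel_right] using this
    have dv1 : HasDerivAt (fun y : ℝ => y ^ (r + 1)) ((r + 1) * x ^ r) x := by
      have := Real.hasDerivAt_rpow_const (x := x) (p := r + 1) (Or.inl hv.ne')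
      simpa [add_sub_cancel_right] using this
    have du2 : HasDerivAt (fun y : ℝ => (y + 1) ^ r) (r * (x + 1) ^ (r - 1)) x := by
      have := (Real.hasDerivAt_rpow_const (x := x + 1) (p := r) (Or.inl hu.ne')).comp x hb
      simpa [Function.comp_def] using this
    have dv2 : HasDerivAt (fun y : ℝ => y ^ r) (r * x ^ (r - 1)) x :=
      Real.hasDerivAt_rpow_const (x := x) (p := r) (Or.inl hv.ne')
    exact (du1.sub dv1).div (du2.add dv2) (by positivity)
  · intro x hx
    have hx1 : (1:ℝ) < x := hx
    have hv : (0:ℝ) < x := lt_trans one_pos hx1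
    have hu : (0:ℝ) < x + 1 := by linarith
    apply div_nonneg _ (sq_nonneg _)
    -- product identities
    have pu : (x + 1) ^ r * (x + 1) ^ r = (x + 1) ^ (2 * r) := by
      rw [← Real.rpow_add hu]; congr 1; ring
    have pv : x ^ r * x ^ r = x ^ (2 * r) := by
      rw [← Real.rpow_add hv]; congr 1; ring
    have puu : (x + 1) ^ (r + 1) * (x + 1) ^ (r - 1) = (x + 1) ^ (2 * r) := by
      rw [← Real.rpow_add hu]; congr 1; ring
    have pvv : x ^ (r + 1) * x ^ (r - 1) = x ^ (2 * r) := by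
      rw [← Real.rpow_add hv]; congr 1; ring
    -- key inequality via g_nonneg at t = (x+1)/x
    have htq : (1:ℝ) ≤ (x + 1) / x := by
      rw [le_div_iff₀ hv]; linarith
    have key := g_nonneg hr htq
    have d1 : ((x + 1) / x) ^ (r + 1) = (x + 1) ^ (r + 1) / x ^ (r + 1) :=
      Real.div_rpow hu.le hv.le _
    have d2 : ((x + 1) / x) ^ (r - 1) = (x + 1) ^ (r - 1) / x ^ (r - 1) :=
      Real.div_rpow hu.le hv.le _
    have d3 : ((x + 1) / x) ^ (2 * r) = (x + 1) ^ (2 * r) / x ^ (2 * r) :=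
      Real.div_rpow hu.le hv.le _
    rw [d1, d2, d3] at key
    have hx1p : (0:ℝ) < x ^ (r + 1) := Real.rpow_pos_of_pos hv _
    have hx2p : (0:ℝ) < x ^ (r - 1) := Real.rpow_pos_of_pos hv _
    have hx3p : (0:ℝ) < x ^ (2 * r) := Real.rpow_pos_of_pos hv _
    have e1 : x ^ (2 * r) = x ^ (r + 1) * x ^ (r - 1) := by
      rw [← Real.rpow_add hv]; congr 1; ring
    have key3 : r * ((x + 1) ^ (r + 1) * x ^ (r - 1)) - r * ((x + 1) ^ (r - 1) * x ^ (r + 1)) ≤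
        (x + 1) ^ (2 * r) - x ^ (2 * r) := by
      have h1 : (x + 1) ^ (r + 1) / x ^ (r + 1) * x ^ (2 * r) =
          (x + 1) ^ (r + 1) * x ^ (r - 1) := by
        rw [e1]; field_simp
      have h2 : (x + 1) ^ (r - 1) / x ^ (r - 1) * x ^ (2 * r) =
          (x + 1) ^ (r - 1) * x ^ (r + 1) := by
        rw [e1]; field_simp
      have h3 : (x + 1) ^ (2 * r) / x ^ (2 * r) * x ^ (2 * r) = (x + 1) ^ (2 * r) := by
        field_simp
      calc r * ((x + 1) ^ (r + 1) * x ^ (r - 1)) - r * ((x + 1) ^ (r - 1) * x ^ (r + 1))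
          = (r * ((x + 1) ^ (r + 1) / x ^ (r + 1)) - r * ((x + 1) ^ (r - 1) / x ^ (r - 1))) *
            x ^ (2 * r) := by rw [sub_mul, mul_assoc, mul_assoc, h1, h2]
        _ ≤ ((x + 1) ^ (2 * r) / x ^ (2 * r) - 1) * x ^ (2 * r) :=
            mul_le_mul_of_nonneg_right key hx3p.le
        _ = (x + 1) ^ (2 * r) - x ^ (2 * r) := by rw [sub_mul, h3, one_mul]
    have expand : ((r + 1) * (x + 1) ^ r - (r + 1) * x ^ r) * ((x + 1) ^ r + x ^ r) -
        ((x + 1) ^ (r + 1) - x ^ (r + 1)) * (r * (x + 1) ^ (r - 1) + r * x ^ (r - 1)) =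
        ((x + 1) ^ (2 * r) - x ^ (2 * r)) -
          (r * ((x + 1) ^ (r + 1) * x ^ (r - 1)) - r * ((x + 1) ^ (r - 1) * x ^ (r + 1))) := by
      linear_combination (r + 1) * pu - (r + 1) * pv - r * puu + r * pvv
    rw [expand]
    linarith [key3]

theorem stmt_10 (n : ℕ) (hn : 1 ≤ n) (r : ℝ) (hr : 1 ≤ r) :
    ((n + 2 : ℝ) ^ r + (n + 1 : ℝ) ^ r) / ((n + 2 : ℝ) ^ (r + 1) - (n + 1 : ℝ) ^ (r + 1)) ≤
    ((n + 1 : ℝ) ^ r + (n : ℝ) ^ r) / ((n + 1 : ℝ) ^ (r + 1) - (n : ℝ) ^ (r + 1)) := by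
  have hx : (1:ℝ) ≤ (n:ℝ) := by exact_mod_cast hn
  set x : ℝ := (n:ℝ) with hxdef
  have hv : (0:ℝ) < x := lt_of_lt_of_le one_pos hx
  have hu : (0:ℝ) < x + 1 := by linarith
  have hrp : (0:ℝ) < r + 1 := by linarith
  -- positive denominators / numerators
  have hN0 : (0:ℝ) < (x + 1) ^ (r + 1) - x ^ (r + 1) :=
    sub_pos.mpr (Real.rpow_lt_rpow hv.le (by linarith) hrp)
  have hN1 : (0:ℝ) < (x + 2) ^ (r + 1) - (x + 1) ^ (r + 1) :=
    sub_pos.mpr (Real.rpow_lt_rpow hu.le (by linarith) hrp)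
  have hD0 : (0:ℝ) < (x + 1) ^ r + x ^ r := by positivity
  have hD1 : (0:ℝ) < (x + 2) ^ r + (x + 1) ^ r := by positivity
  have hmono := phi_mono hr (Set.mem_Ici.mpr hx) (Set.mem_Ici.mpr (by linarith : (1:ℝ) ≤ x + 1))
    (by linarith : x ≤ x + 1)
  simp only at hmono
  have e2 : x + 1 + 1 = x + 2 := by ring
  rw [e2] at hmono
  -- hmono : Nm x / D x ≤ Nm (x+1) / D (x+1)
  have hcross := (div_le_div_iff₀ hD0 hD1).mp hmono
  rw [div_le_div_iff₀ hN1 hN0]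
  nlinarith [hcross]
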